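/- For λ ∈ S* and u ∈ S, the wavelet transforms satisfy W^{ρ_σ}_u(λ) * W^{ρ_σ}_u(u)(x,t) = conj(t) · (W^ρ_u(λ) # W^ρ_u(u))(x). Consequently, u is ρ-analyzing (i.e. W^ρ_u(λ) # W^ρ_u(u) = W^ρ_u(λ) for all λ ∈ S*) if and only if u is ρ_σ-analyzing (i.e. W^{ρ_σ}_u(λ) * W^{ρ_σ}_u(u) = W^{ρ_σ}_u(λ) for all λ ∈ S*). -/

import Mathlib

open MeasureTheory ComplexConjugate

/-- Mackey multiplication on G × 𝕋 (for `t : Circle` its conjugate is `t⁻¹`). -/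
noncomputable def mackeyMul {G : Type*} [Group G] (σ : G → G → Circle) :
    G × Circle → G × Circle → G × Circle :=
  fun p q => (p.1 * q.1, (σ p.1 q.1)⁻¹ * p.2 * q.2)

/-- Inversion in the Mackey group: (x,t)⁻¹ = (x⁻¹, σ(x,x⁻¹) conj(t)). -/
noncomputable def mackeyInv {G : Type*} [Group G] (σ : G → G → Circle) :
    G × Circle → G × Circle :=
  fun p => (p.1⁻¹, σ p.1 p.1⁻¹ * p.2⁻¹)

/-- For λ ∈ S* (modeled as a conjugate-linear functional `l`) and
u ∈ S (viewed in S* via the pairing `Λu`, so that W^ρ_u(u)(x) = Λu(ρ(x)u) and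
W^ρ_u(λ)(x) = l(ρ(x)u), with W^{ρ_σ}_u(λ)(x,t) = conj(t) l(ρ(x)u)):
W^{ρ_σ}_u(λ) * W^{ρ_σ}_u(u)(x,t) = conj(t) · (W^ρ_u(λ) # W^ρ_u(u))(x), where *
is group convolution on G_σ = G × 𝕋 (with normalized Haar measure on 𝕋) and
# is the twisted convolution on G. Consequently u is ρ-analyzing iff u is
ρ_σ-analyzing. -/
theorem stmt17 {G : Type*} [Group G] [MeasurableSpace G] [MeasurableSpace Circle]
    {S : Type*} [AddCommGroup S] [Module ℂ S]
    (μ : Measure G) [μ.IsMulLeftInvariant]  -- left Haar measure on G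
    (ν : Measure Circle) [IsProbabilityMeasure ν]  -- normalized Haar on 𝕋
    (σ : G → G → Circle)
    (hnorm : ∀ x : G, σ x 1 = 1 ∧ σ 1 x = 1)
    (hcoc : ∀ x y z : G, σ (x * y) z * σ x y = σ x (y * z) * σ y z)
    (ρ : G → (S ≃ₗ[ℂ] S))
    (hone : ρ 1 = LinearEquiv.refl ℂ S)
    (hmul : ∀ x y : G, ∀ v : S, ρ (x * y) v = ((σ x y : ℂ)) • ρ x (ρ y v))
    (u : S) (Λu : S →ₛₗ[starRingEnd ℂ] ℂ) :
    (∀ (l : S →ₛₗ[starRingEnd ℂ] ℂ) (x : G) (t : Circle),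
      (∫ y : G, ∫ w : Circle,
          (conj ((w : ℂ)) * l (ρ y u)) *
            (conj (((mackeyMul σ (mackeyInv σ (y, w)) (x, t)).2 : ℂ)) *
              Λu (ρ (mackeyMul σ (mackeyInv σ (y, w)) (x, t)).1 u)) ∂ν ∂μ) =
        conj ((t : ℂ)) *
          ∫ y : G, l (ρ y u) * Λu (ρ (y⁻¹ * x) u) *
            conj ((σ y (y⁻¹ * x) : ℂ)) ∂μ) ∧
    ((∀ (l : S →ₛₗ[starRingEnd ℂ] ℂ) (x : G),
        (∫ y : G, l (ρ y u) * Λu (ρ (y⁻¹ * x) u) *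
            conj ((σ y (y⁻¹ * x) : ℂ)) ∂μ) = l (ρ x u)) ↔
      (∀ (l : S →ₛₗ[starRingEnd ℂ] ℂ) (x : G) (t : Circle),
        (∫ y : G, ∫ w : Circle,
            (conj ((w : ℂ)) * l (ρ y u)) *
              (conj (((mackeyMul σ (mackeyInv σ (y, w)) (x, t)).2 : ℂ)) *
                Λu (ρ (mackeyMul σ (mackeyInv σ (y, w)) (x, t)).1 u)) ∂ν ∂μ) =
          conj ((t : ℂ)) * l (ρ x u))) := by

  -- cocycle consequence: conj (σ y (y⁻¹x)) = σ y⁻¹ x * conj (σ y y⁻¹)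
  have key : ∀ x y : G,
      (conj ((σ y (y⁻¹ * x) : ℂ))) = (σ y⁻¹ x : ℂ) * conj ((σ y y⁻¹ : ℂ)) := by
    intro x y
    have h := hcoc y y⁻¹ x
    rw [mul_inv_cancel, (hnorm x).2, one_mul] at h
    have h2 : σ y (y⁻¹ * x) = σ y y⁻¹ * (σ y⁻¹ x)⁻¹ := by
      rw [h]; group
    rw [← Circle.coe_inv_eq_conj, ← Circle.coe_inv_eq_conj, h2]
    push_cast [mul_inv_rev, inv_inv]
    ring
  have main : ∀ (l : S →ₛₗ[starRingEnd ℂ] ℂ) (x : G) (t : Circle),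
      (∫ y : G, ∫ w : Circle,
          (conj ((w : ℂ)) * l (ρ y u)) *
            (conj (((mackeyMul σ (mackeyInv σ (y, w)) (x, t)).2 : ℂ)) *
              Λu (ρ (mackeyMul σ (mackeyInv σ (y, w)) (x, t)).1 u)) ∂ν ∂μ) =
        conj ((t : ℂ)) *
          ∫ y : G, l (ρ y u) * Λu (ρ (y⁻¹ * x) u) *
            conj ((σ y (y⁻¹ * x) : ℂ)) ∂μ := by
    intro l x t
    have hinner : ∀ y : G, (∫ w : Circle,
        (conj ((w : ℂ)) * l (ρ y u)) *
          (conj (((mackeyMul σ (mackeyInv σ (y, w)) (x, t)).2 : ℂ)) *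
            Λu (ρ (mackeyMul σ (mackeyInv σ (y, w)) (x, t)).1 u)) ∂ν) =
        conj ((t : ℂ)) * (l (ρ y u) * Λu (ρ (y⁻¹ * x) u) *
            conj ((σ y (y⁻¹ * x) : ℂ))) := by
      intro y
      have hi : ∀ w : Circle,
          (conj ((w : ℂ)) * l (ρ y u)) *
            (conj (((mackeyMul σ (mackeyInv σ (y, w)) (x, t)).2 : ℂ)) *
              Λu (ρ (mackeyMul σ (mackeyInv σ (y, w)) (x, t)).1 u)) =
          conj ((t : ℂ)) * (l (ρ y u) * Λu (ρ (y⁻¹ * x) u) *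
            conj ((σ y (y⁻¹ * x) : ℂ))) := by
        intro w
        simp only [mackeyMul, mackeyInv]
        rw [key x y]
        rw [← Circle.coe_inv_eq_conj, ← Circle.coe_inv_eq_conj,
          ← Circle.coe_inv_eq_conj]
        push_cast [mul_inv_rev, inv_inv]
        have hw : (w : ℂ)⁻¹ * (w : ℂ) = 1 := inv_mul_cancel₀ (Circle.coe_ne_zero w)
        have hs : ∀ z : Circle, (starRingEnd ℂ) ((z : ℂ)) * (z : ℂ) = 1 := by
          intro z
          rw [← Circle.coe_inv_eq_conj]
          exact inv_mul_cancel₀ (Circle.coe_ne_zero z)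
        field_simp
        linear_combination (-(l ((ρ y) u) * Λu ((ρ (y⁻¹ * x)) u))) * hs (σ y y⁻¹)
      rw [integral_congr_ae (Filter.Eventually.of_forall hi), integral_const]
      simp
    rw [integral_congr_ae (Filter.Eventually.of_forall hinner),
      MeasureTheory.integral_const_mul]
  refine ⟨main, ?_⟩
  constructor
  · intro h l x t
    rw [main l x t, h l x]
  · intro h l x
    have := h l x 1
    simpa [main l x 1] using this
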